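/- Jacobi's identity: as formal power series, ∏_{j≥1}(1−q^j)³ = ∑_{k≥0} (−1)^k (2k+1) q^{k(k+1)/2}. -/

import Mathlib

noncomputable section JacobiAux
open Polynomial Finset



/-- Gaussian binomial coefficient `[N, m]_q` as a polynomial in `q = X`. -/
noncomputable def gauss : ℕ → ℕ → Polynomial ℤ
  | 0, 0 => 1
  | 0, _+1 => 0
  | N+1, 0 => gauss N 0
  | N+1, m+1 => gauss N (m+1) + X ^ (N - m) * gauss N m

lemma gauss_ruleA (N m : ℕ) :
    gauss (N+1) (m+1) = gauss N (m+1) + X ^ (N - m) * gauss N m := rfl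

lemma gauss_zero_right (N : ℕ) : gauss N 0 = 1 := by
  induction N with
  | zero => rfl
  | succ N ih => rw [gauss, ih]

lemma gauss_eq_zero : ∀ {N m : ℕ}, N < m → gauss N m = 0
  | 0, m+1, _ => rfl
  | N+1, m+1, h => by
      rw [gauss_ruleA, gauss_eq_zero (show N < m+1 by omega),
        gauss_eq_zero (show N < m by omega), mul_zero, add_zero]

lemma gauss_diag (N : ℕ) : gauss N N = 1 := by
  induction N with
  | zero => rfl
  | succ N ih =>
    rw [gauss_ruleA, gauss_eq_zero (by omega), Nat.sub_self, pow_zero, ih]; ring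

/-- Rule B for Gaussian binomials. -/
lemma gauss_ruleB (N m : ℕ) :
    gauss (N+1) (m+1) = X ^ (m+1) * gauss N (m+1) + gauss N m := by
  induction N generalizing m with
  | zero =>
    match m with
    | 0 => simp [gauss]
    | m+1 =>
      simp [show gauss 0 (m+1+1) = 0 from rfl, show gauss 0 (m+1) = 0 from rfl,
        show gauss 1 (m+1+1) = 0 from gauss_eq_zero (by omega)]
  | succ N ih =>
    rcases le_or_gt m N with hm | hm
    · match m, hm with
      | 0, _ =>
        have h1 : gauss (N+2) 1 = gauss (N+1) 1 + X^(N+1) * gauss (N+1) 0 := by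
          have := gauss_ruleA (N+1) 0; rwa [Nat.sub_zero] at this
        have h2 := ih 0
        have h3 : gauss (N+1) 1 = gauss N 1 + X^N * gauss N 0 := by
          have := gauss_ruleA N 0; rwa [Nat.sub_zero] at this
        have h4 : gauss (N+1) 0 = gauss N 0 := rfl
        linear_combination h1 + h2 - X*h3 + (X^(N+1) - 1)*h4
      | m'+1, hm =>
        set s := N - (m'+1) with hs
        have h1 : gauss (N+2) (m'+2) = gauss (N+1) (m'+2) + X^(s+1) * gauss (N+1) (m'+1) := by
          have := gauss_ruleA (N+1) (m'+1); rwa [show N+1-(m'+1) = s+1 by omega] at this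
        have h2 := ih (m'+1)
        have h3 := ih m'
        have h4 : gauss (N+1) (m'+2) = gauss N (m'+2) + X^s * gauss N (m'+1) := by
          have := gauss_ruleA N (m'+1); rwa [show N-(m'+1) = s by omega] at this
        have h5 : gauss (N+1) (m'+1) = gauss N (m'+1) + X^(s+1) * gauss N m' := by
          have := gauss_ruleA N m'; rwa [show N-m' = s+1 by omega] at this
        linear_combination h1 + h2 - X^(m'+2)*h4 + X^(s+1)*h3 - h5
    · rcases Nat.lt_or_ge (N+1) m with hm2 | hm2
      · rw [gauss_ruleA, gauss_eq_zero (show N+1 < m+1 by omega),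
          gauss_eq_zero (show N+1 < m by omega)]
        simp
      · have hmeq : m = N + 1 := by omega
        subst hmeq
        rw [gauss_ruleA, gauss_eq_zero (show N+1 < N+2 by omega)]
        simp


/-- Triangular number `k(k+1)/2` for integer `k`, as a natural number. -/
def T (k : ℤ) : ℕ := (k * (k + 1) / 2).toNat

lemma T_cast (k : ℤ) : (T k : ℤ) * 2 = k * (k + 1) := by
  have h2 : (2:ℤ) ∣ k * (k+1) := Int.even_mul_succ_self k |>.two_dvd
  have hnn : 0 ≤ k * (k+1) := by nlinarith [sq_nonneg (2*k+1)]
  rw [T, Int.toNat_of_nonneg (Int.ediv_nonneg hnn (by norm_num)),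
    Int.ediv_mul_cancel h2]

lemma T_succ (k : ℤ) : (T (k+1) : ℤ) = T k + k + 1 := by
  have h : (T (k+1) : ℤ) * 2 - (T k : ℤ) * 2 = 2*k + 2 := by
    rw [T_cast, T_cast]; ring
  omega

lemma T_neg (k : ℤ) : T (-1 - k) = T k := by
  have h := T_cast (-1-k); have h2 := T_cast k
  have : ((T (-1-k) : ℤ)) * 2 = (T k : ℤ) * 2 := by rw [h, h2]; ring
  omega

lemma T_ofNat (a : ℕ) : T a = a * (a+1) / 2 := by
  have h := T_cast (a : ℤ)
  have h2 : ((a*(a+1) : ℕ) : ℤ) = (a:ℤ) * ((a:ℤ)+1) := by push_cast; ring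
  omega

lemma T_nonneg_ge (a : ℕ) : a ≤ T a := by
  have h := T_cast (a : ℤ)
  have h2 : (a:ℤ) * ((a:ℤ)+1) ≥ 2*a := by nlinarith [sq_nonneg ((a:ℤ))]
  omega

/-- The `z^m` coefficient of `∏_{j<n} (1+z q^{j+1})(z+q^j)`. -/
noncomputable def l : ℕ → ℕ → Polynomial ℤ
  | 0, 0 => 1
  | 0, _+1 => 0
  | n+1, 0 => X^n * l n 0
  | n+1, 1 => l n 0 + X^n * l n 1 + X^(2*n+1) * l n 0
  | n+1, m+2 => l n (m+1) + X^n * l n (m+2) + X^(n+1) * l n m + X^(2*n+1) * l n (m+1)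

lemma gauss_star (n m : ℕ) (hm : m ≤ 2*n) :
    gauss (2*n+2) (m+2) = X^(m+2) * gauss (2*n) (m+2)
      + (1 + X^(2*n+1)) * gauss (2*n) (m+1) + X^(2*n-m) * gauss (2*n) m := by
  have h1 : gauss (2*n+2) (m+2) = X^(m+2) * gauss (2*n+1) (m+2) + gauss (2*n+1) (m+1) :=
    gauss_ruleB (2*n+1) (m+1)
  have h3 : gauss (2*n+1) (m+1) = gauss (2*n) (m+1) + X^(2*n-m) * gauss (2*n) m :=
    gauss_ruleA (2*n) m
  rcases Nat.lt_or_ge m (2*n) with hlt | hge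
  · have h2 : gauss (2*n+1) (m+2) = gauss (2*n) (m+2) + X^(2*n-m-1) * gauss (2*n) (m+1) := by
      have := gauss_ruleA (2*n) (m+1); rwa [show 2*n-(m+1) = 2*n-m-1 by omega] at this
    have hpow : (X:Polynomial ℤ)^(m+2) * X^(2*n-m-1) = X^(2*n+1) := by
      rw [← pow_add]; congr 1; omega
    linear_combination h1 + X^(m+2)*h2 + h3 + gauss (2*n) (m+1) * hpow
  · have hme : m = 2*n := by omega
    subst hme
    have h2 : gauss (2*n+1) (2*n+2) = 0 := gauss_eq_zero (by omega)
    have h4 : gauss (2*n) (2*n+1) = 0 := gauss_eq_zero (by omega)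
    have h5 : gauss (2*n) (2*n+2) = 0 := gauss_eq_zero (by omega)
    rw [Nat.sub_self] at h3 ⊢
    linear_combination h1 + h3 + X^(2*n+2)*h2 - X^(2*n+2)*h5 - X^(2*n+1)*h4

lemma l_eq (n m : ℕ) : l n m = gauss (2*n) m * X ^ (T ((m:ℤ) - (n:ℤ))) := by
  induction n generalizing m with
  | zero =>
    match m with
    | 0 => simp [l, gauss, T]
    | m+1 =>
      rw [show l 0 (m+1) = 0 from rfl, gauss_eq_zero (show 2*0 < m+1 by omega)]
      simp
  | succ n ih =>
    match m with
    | 0 =>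
      rw [show l (n+1) 0 = X^n * l n 0 from rfl, ih 0, gauss_zero_right, gauss_zero_right,
        one_mul, one_mul, ← pow_add]
      congr 1
      rw [show ((0:ℕ):ℤ) - ((n:ℕ):ℤ) = -(n:ℤ) by push_cast; ring,
        show ((0:ℕ):ℤ) - ((n+1:ℕ):ℤ) = -(n:ℤ)-1 by push_cast; ring]
      have h := T_succ (-(n:ℤ)-1)
      rw [show -(n:ℤ)-1+1 = -(n:ℤ) by ring] at h
      omega
    | 1 =>
      rw [show l (n+1) 1 = l n 0 + X^n * l n 1 + X^(2*n+1) * l n 0 from rfl, ih 0, ih 1,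
        show (2*(n+1)) = 2*n+2 by ring,
        show ((0:ℕ):ℤ) - ((n:ℕ):ℤ) = -(n:ℤ) by push_cast; ring,
        show ((1:ℕ):ℤ) - ((n:ℕ):ℤ) = -(n:ℤ)+1 by push_cast; ring,
        show ((1:ℕ):ℤ) - ((n+1:ℕ):ℤ) = -(n:ℤ) by push_cast; ring,
        gauss_zero_right]
      have hg : gauss (2*n+2) 1 = X * gauss (2*n) 1 + X^(2*n+1) + 1 := by
        have b := gauss_ruleB (2*n+1) 0
        have a := gauss_ruleA (2*n) 0
        rw [gauss_zero_right] at b a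
        rw [Nat.sub_zero] at a
        rw [b, a]; ring
      have hpow : n + T (-(n:ℤ)+1) = 1 + T (-(n:ℤ)) := by
        have := T_succ (-(n:ℤ)); omega
      have hP : (X:Polynomial ℤ)^n * X^(T (-(n:ℤ)+1)) = X^1 * X^(T (-(n:ℤ))) := by
        rw [← pow_add, ← pow_add, hpow]
      linear_combination (-X^(T (-(n:ℤ)))) * hg + gauss (2*n) 1 * hP
    | m+2 =>
      rw [show l (n+1) (m+2) = l n (m+1) + X^n * l n (m+2) + X^(n+1) * l n m
          + X^(2*n+1) * l n (m+1) from rfl, ih (m+1), ih (m+2), ih m,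
        show (2*(n+1)) = 2*n+2 by ring]
      rcases Nat.lt_or_ge (2*n+1) m with hbig | hsm
      · rw [gauss_eq_zero (show 2*n < m+1 by omega), gauss_eq_zero (show 2*n < m+2 by omega),
          gauss_eq_zero (show 2*n < m by omega), gauss_eq_zero (show 2*n+2 < m+2 by omega)]
        simp
      · rcases Nat.lt_or_ge (2*n) m with hm21 | hm2
        · have hme : m = 2*n+1 := by omega
          subst hme
          rw [gauss_eq_zero (show 2*n < 2*n+1 by omega),
            gauss_eq_zero (show 2*n < 2*n+1+1 by omega),
            gauss_eq_zero (show 2*n < 2*n+1+2 by omega),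
            gauss_eq_zero (show 2*n+2 < 2*n+1+2 by omega)]
          simp
        · rw [gauss_star n m hm2,
            show ((m+2:ℕ):ℤ) - ((n+1:ℕ):ℤ) = (m:ℤ) - n + 1 by push_cast; ring,
            show ((m+2:ℕ):ℤ) - ((n:ℕ):ℤ) = (m:ℤ) - n + 2 by push_cast; ring,
            show ((m+1:ℕ):ℤ) - ((n:ℕ):ℤ) = (m:ℤ) - n + 1 by push_cast; ring]
          set e0 := T ((m:ℤ) - n) with he0
          set e1 := T ((m:ℤ) - n + 1) with he1
          set e2 := T ((m:ℤ) - n + 2) with he2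
          have t1 : (e1 : ℤ) = e0 + ((m:ℤ) - n) + 1 := T_succ _
          have t2 : (e2 : ℤ) = e1 + ((m:ℤ) - n + 1) + 1 := by
            have h := T_succ ((m:ℤ) - n + 1)
            rw [show (m:ℤ) - n + 1 + 1 = (m:ℤ) - n + 2 by ring] at h
            rw [← he1, ← he2] at h
            exact h
          have E2 : (X:Polynomial ℤ)^n * X^e2 = X^(m+2) * X^e1 := by
            rw [← pow_add, ← pow_add]; congr 1; omega
          have E0 : (X:Polynomial ℤ)^(n+1) * X^e0 = X^(2*n-m) * X^e1 := by
            rw [← pow_add, ← pow_add]; congr 1; omega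
          linear_combination gauss (2*n) (m+2) * E2 + gauss (2*n) m * E0

/-- `q^j` as a constant (in `z`) polynomial. -/
noncomputable def qc (j : ℕ) : Polynomial (Polynomial ℤ) := C (X ^ j)

/-- The two-variable product `∏_{j<n} (1 + z q^{j+1})(z + q^j)`. -/
noncomputable def L (n : ℕ) : Polynomial (Polynomial ℤ) :=
  ∏ j ∈ Finset.range n, ((1 + qc (j+1) * X) * (X + qc j))

lemma L_succ (n : ℕ) :
    L (n+1) = L n * qc n + L n * X + (L n * qc (n+1)) * X^2 + (L n * qc (2*n+1)) * X := by
  rw [L, Finset.prod_range_succ, ← L]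
  have hq : qc (n+1) * qc n = qc (2*n+1) := by
    rw [qc, qc, qc, ← C_mul, ← pow_add]; congr 2; omega
  linear_combination (L n * X) * hq

lemma L_coeff (n m : ℕ) : (L n).coeff m = l n m := by
  induction n generalizing m with
  | zero =>
    match m with
    | 0 => simp [L, l]
    | m+1 => simp [L, l, Polynomial.coeff_one]
  | succ n ih =>
    have h2 : ∀ m : ℕ, (L n * C (X^(n+1) : Polynomial ℤ) * X^2).coeff m =
        if 2 ≤ m then X^(n+1) * l n (m-2) else 0 := by
      intro m
      rw [Polynomial.coeff_mul_X_pow']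
      simp only [Polynomial.coeff_mul_C]
      split <;> simp [ih, mul_comm]
    have h1 : ∀ (c : ℕ) (m : ℕ), (L n * C (X^c : Polynomial ℤ) * X).coeff m =
        if 1 ≤ m then X^c * l n (m-1) else 0 := by
      intro c m
      rw [show (L n * C (X^c : Polynomial ℤ) * X) = (L n * C (X^c) * X^1) by ring,
        Polynomial.coeff_mul_X_pow']
      simp only [Polynomial.coeff_mul_C]
      split <;> simp [ih, mul_comm]
    have h1' : ∀ m : ℕ, (L n * X).coeff m = if 1 ≤ m then l n (m-1) else 0 := by
      intro m
      rw [show (L n * X) = (L n * X^1) by ring, Polynomial.coeff_mul_X_pow']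
      split <;> simp [ih]
    rw [L_succ, Polynomial.coeff_add, Polynomial.coeff_add, Polynomial.coeff_add]
    simp only [qc]
    rw [h1', h2, h1, Polynomial.coeff_mul_C, ih]
    match m with
    | 0 => simp [l, mul_comm]
    | 1 => simp [l, mul_comm]; ring
    | m+2 =>
      simp only [show (2:ℕ) ≤ m+2 by omega, show (1:ℕ) ≤ m+2 by omega, if_pos, if_true]
      rw [show m+2-1 = m+1 by omega, show m+2-2 = m by omega, show l (n+1) (m+2) =
        l n (m+1) + X^n * l n (m+2) + X^(n+1) * l n m + X^(2*n+1) * l n (m+1) from rfl]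
      ring

lemma prod_neg' (n : ℕ) (f : ℕ → Polynomial ℤ) :
    ∏ j ∈ Finset.range n, (-(f j)) = (-1)^n * ∏ j ∈ Finset.range n, f j := by
  induction n with
  | zero => simp
  | succ n ih => rw [Finset.prod_range_succ, Finset.prod_range_succ, ih]; ring

lemma L_natDegree (n : ℕ) : (L n).natDegree ≤ 2 * n := by
  have : ∀ j : ℕ, ((1 + qc (j+1) * X) * (X + qc j) : Polynomial (Polynomial ℤ)).natDegree ≤ 2 := by
    intro j
    refine le_trans (Polynomial.natDegree_mul_le) ?_
    have a1 : (1 + qc (j+1) * X : Polynomial (Polynomial ℤ)).natDegree ≤ 1 := by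
      refine le_trans (Polynomial.natDegree_add_le _ _) ?_
      simp only [Polynomial.natDegree_one, qc]
      refine max_le (by omega) (le_trans (Polynomial.natDegree_mul_le) ?_)
      simp
    have a2 : (X + qc j : Polynomial (Polynomial ℤ)).natDegree ≤ 1 := by
      refine le_trans (Polynomial.natDegree_add_le _ _) ?_
      simp [qc]
    omega
  rw [L]
  refine le_trans (Polynomial.natDegree_prod_le _ _)
    (le_trans (Finset.sum_le_sum fun j _ => this j) (by simp [mul_comm]))

/-- `∏_{j<n}(1-q^{j+1})` -/
noncomputable def Pq (n : ℕ) : Polynomial ℤ := ∏ j ∈ Finset.range n, (1 - X ^ (j+1))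

lemma L_factor (n : ℕ) : L (n+1) =
    (X + 1) * ((∏ j ∈ Finset.range (n+1), (1 + qc (j+1) * X))
      * ∏ j ∈ Finset.range n, (X + qc (j+1))) := by
  rw [L, Finset.prod_mul_distrib]
  rw [Finset.prod_range_succ' (fun j => (X + qc j : Polynomial (Polynomial ℤ))) n]
  rw [show qc 0 = 1 by simp [qc]]
  ring

lemma deriv_eval (n : ℕ) :
    Polynomial.eval (-1 : Polynomial ℤ) (Polynomial.derivative (L (n+1)))
      = Pq (n+1) * ((-1)^n * Pq n) := by
  rw [L_factor]
  set G := (∏ j ∈ Finset.range (n+1), (1 + qc (j+1) * X))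
      * ∏ j ∈ Finset.range n, (X + qc (j+1)) with hG
  rw [Polynomial.derivative_mul]
  simp only [Polynomial.derivative_add, Polynomial.derivative_X, Polynomial.derivative_one,
    add_zero, one_mul, Polynomial.eval_add, Polynomial.eval_mul, Polynomial.eval_add,
    Polynomial.eval_X, Polynomial.eval_one, neg_add_cancel, zero_mul, add_zero]
  rw [hG, Polynomial.eval_mul, Polynomial.eval_prod, Polynomial.eval_prod]
  congr 1
  · rw [Pq]
    refine Finset.prod_congr rfl fun j _ => ?_
    simp [qc]
    ring
  · rw [Pq, show ((-1:Polynomial ℤ))^n * ∏ j ∈ Finset.range n, (1 - X^(j+1)) =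
      ∏ j ∈ Finset.range n, (-(1 - X^(j+1))) by rw [prod_neg']]
    refine Finset.prod_congr rfl fun j _ => ?_
    simp [qc]
    ring

lemma main_identity (n : ℕ) :
    Pq (n+1) * ((-1)^n * Pq n) =
      ∑ i ∈ Finset.range (2*n+2), l (n+1) (i+1) * ((i : Polynomial ℤ) + 1) * (-1)^i := by
  rw [← deriv_eval]
  have hd : (Polynomial.derivative (L (n+1))).natDegree < 2*n+2 := by
    have h1 := Polynomial.natDegree_derivative_le (L (n+1))
    have h2 := L_natDegree (n+1)
    omega
  rw [Polynomial.eval_eq_sum_range' hd]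
  refine Finset.sum_congr rfl fun i _ => ?_
  rw [Polynomial.coeff_derivative, L_coeff]

lemma Pq_succ (n : ℕ) : Pq (n+1) = Pq n * (1 - X^(n+1)) := Finset.prod_range_succ _ _

lemma Pq_zero : Pq 0 = 1 := Finset.prod_range_zero _

lemma Pq_stab (n d : ℕ) : (X:Polynomial ℤ)^(n+1) ∣ Pq (n+d) - Pq n := by
  induction d with
  | zero => simp
  | succ d ih =>
    have : Pq (n+(d+1)) - Pq n = Pq (n+d) * (0 - X^(n+d+1)) + (Pq (n+d) - Pq n) := by
      rw [show n+(d+1) = (n+d)+1 from rfl, Pq_succ]; ring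
    rw [this]
    exact dvd_add (Dvd.dvd.mul_left (dvd_sub (dvd_zero _) (pow_dvd_pow _ (by omega))) _) ih

lemma tail_dvd (a t : ℕ) :
    (X:Polynomial ℤ)^(a+1) ∣ (∏ j ∈ Finset.range t, (1 - X^(a+j+1))) - 1 := by
  induction t with
  | zero => simp
  | succ t ih =>
    rw [Finset.prod_range_succ]
    have : (∏ j ∈ Finset.range t, ((1:Polynomial ℤ) - X^(a+j+1))) * (1 - X^(a+t+1)) - 1 =
        ((∏ j ∈ Finset.range t, ((1:Polynomial ℤ) - X^(a+j+1))) - 1) * (1 - X^(a+t+1)) +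
          (0 - X^(a+t+1)) := by ring
    rw [this]
    exact dvd_add (Dvd.dvd.mul_right ih _)
      (dvd_sub (dvd_zero _) (pow_dvd_pow _ (by omega)))

lemma dvd_gauss : ∀ M m : ℕ, (X:Polynomial ℤ)^(M+1-m) ∣ Pq m * gauss M m - 1 := by
  intro M
  induction M with
  | zero =>
    intro m
    match m with
    | 0 => simp [Pq_zero, gauss_zero_right]
    | m+1 => rw [show 0+1-(m+1) = 0 by omega, pow_zero]; exact one_dvd _
  | succ M ih =>
    intro m
    match m with
    | 0 => simp [Pq_zero, gauss_zero_right]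
    | m'+1 =>
      rcases Nat.lt_or_ge (M+1) (m'+1) with hm | hm
      · rw [show M+1+1-(m'+1) = 0 by omega, pow_zero]; exact one_dvd _
      · have key : Pq (m'+1) * gauss (M+1) (m'+1) - 1 =
            X^(m'+1) * (Pq (m'+1) * gauss M (m'+1) - 1)
              + (1 - X^(m'+1)) * (Pq m' * gauss M m' - 1) := by
          rw [gauss_ruleB, Pq_succ]; ring
        rw [key]
        refine dvd_add ?_ ?_
        · obtain ⟨r, hr⟩ := ih (m'+1)
          rw [hr, show (X:Polynomial ℤ)^(m'+1) * (X^(M+1-(m'+1)) * r) = X^(M+1) * r by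
            rw [← mul_assoc, ← pow_add]; congr 2; omega]
          exact Dvd.dvd.mul_right (pow_dvd_pow _ (by omega)) _
        · exact Dvd.dvd.mul_left
            (by have := ih m'; rwa [show M+1-m' = M+1+1-(m'+1) by omega] at this) _

lemma gauss_symm : ∀ N m : ℕ, m ≤ N → gauss N m = gauss N (N - m) := by
  intro N
  induction N with
  | zero => intro m hm; interval_cases m; rfl
  | succ N ih =>
    intro m hm
    match m with
    | 0 => rw [gauss_zero_right, Nat.sub_zero, gauss_diag]
    | m'+1 =>
      rcases Nat.lt_or_ge m' N with hlt | hge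
      · obtain ⟨t, ht'⟩ : ∃ t, N - m' = t + 1 := ⟨N-m'-1, by omega⟩
        rw [gauss_ruleA, ih (m'+1) (by omega), ih m' (by omega),
          show N-(m'+1) = t by omega, ht', show N+1-(m'+1) = t+1 by omega,
          gauss_ruleB N t]
        ring
      · have : m' = N := by omega
        subst this
        rw [gauss_diag, Nat.sub_self, gauss_zero_right]

lemma dvd_P_gauss (n m : ℕ) (hm : m ≤ 2*n+2) :
    (X:Polynomial ℤ)^(min (m+1) (2*n+3-m)) ∣ Pq (n+1) * gauss (2*n+2) m - 1 := by
  have half : ∀ m' : ℕ, m' ≤ n+1 →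
      (X:Polynomial ℤ)^(min (m'+1) (2*n+3-m')) ∣ Pq (n+1) * gauss (2*n+2) m' - 1 := by
    intro m' hm'
    obtain ⟨b, hb⟩ : ∃ b, n + 1 = m' + b := ⟨n+1-m', by omega⟩
    have hsplit : Pq (n+1) = Pq m' * ∏ j ∈ Finset.range b, (1 - X^(m'+j+1)) := by
      rw [Pq, Pq, hb, Finset.prod_range_add]
    have key : Pq (n+1) * gauss (2*n+2) m' - 1 =
        (Pq m' * gauss (2*n+2) m' - 1) * (∏ j ∈ Finset.range b, (1 - X^(m'+j+1)))
          + ((∏ j ∈ Finset.range b, (1 - X^(m'+j+1))) - 1) := by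
      rw [hsplit]; ring
    rw [key]
    refine dvd_add ?_ ?_
    · have hdg := dvd_gauss (2*n+2) m'
      rw [show 2*n+2+1-m' = 2*n+3-m' by omega] at hdg
      exact Dvd.dvd.mul_right (dvd_trans (pow_dvd_pow _ (min_le_right _ _)) hdg) _
    · exact dvd_trans (pow_dvd_pow _ (by omega : min (m'+1) (2*n+3-m') ≤ m'+1))
        (tail_dvd m' b)
  rcases le_or_gt m (n+1) with h | h
  · exact half m h
  · rw [gauss_symm (2*n+2) m hm]
    have h2 := half (2*n+2-m) (by omega)
    rwa [show 2*n+2-m+1 = 2*n+3-m by omega, show 2*n+3-(2*n+2-m) = m+1 by omega,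
      min_comm] at h2


lemma neg_one_pow_congr' {a b : ℕ} (h : a % 2 = b % 2) : ((-1:ℤ))^a = (-1)^b := by
  rcases Nat.even_or_odd a with ha | ha
  · have ha' : a % 2 = 0 := Nat.even_iff.mp ha
    rw [ha.neg_one_pow, (Nat.even_iff.mpr (by omega : b % 2 = 0)).neg_one_pow]
  · have ha' : a % 2 = 1 := Nat.odd_iff.mp ha
    rw [ha.neg_one_pow, (Nat.odd_iff.mpr (by omega : b % 2 = 1)).neg_one_pow]

lemma T_bound (N i : ℕ) (h : i < 2*N+2) :
    N + 1 ≤ T ((i:ℤ) - N) + min (i+2) (2*N+2-i) := by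
  rcases le_or_gt N i with hi | hi
  · have h1 : (i:ℤ) - N = ((i - N : ℕ) : ℤ) := by omega
    rw [h1]
    have := T_nonneg_ge (i - N)
    omega
  · have h1 : (i:ℤ) - N = -1 - ((N - i - 1 : ℕ) : ℤ) := by omega
    rw [h1, T_neg]
    have := T_nonneg_ge (N - i - 1)
    omega

lemma final_sum (N : ℕ) :
    ∑ i ∈ Finset.range (2*N+2),
        (((i:ℤ)+1) * (-1)^(i+N) * (if N = T ((i:ℤ) - (N:ℤ)) then 1 else 0))
      = ∑ k ∈ Finset.range (N+1),
          (if k*(k+1)/2 = N then (-1:ℤ)^k * (2*k+1) else 0) := by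
  rw [show 2*N+2 = N + (N+2) by ring, Finset.sum_range_add]
  have hfirst : ∑ i ∈ Finset.range N,
      (((i:ℤ)+1) * (-1)^(i+N) * (if N = T ((i:ℤ) - (N:ℤ)) then 1 else 0))
      = ∑ j ∈ Finset.range N,
        (((N:ℤ)-j) * (-1)^(j+1) * (if j*(j+1)/2 = N then 1 else 0)) := by
    rw [← Finset.sum_range_reflect]
    refine Finset.sum_congr rfl fun j hj => ?_
    rw [Finset.mem_range] at hj
    have h1 : ((N-1-j : ℕ):ℤ) = (N:ℤ) - 1 - j := by omega
    rw [h1, show (N:ℤ) - 1 - j - N = -1 - (j:ℤ) by ring, T_neg, T_ofNat,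
      neg_one_pow_congr' (show ((N-1-j)+N) % 2 = (j+1) % 2 by omega),
      show (N:ℤ) - 1 - (j:ℤ) + 1 = (N:ℤ) - j by ring]
    rcases eq_or_ne (j*(j+1)/2) N with h | h
    · rw [if_pos h.symm, if_pos h]
    · rw [if_neg (Ne.symm h), if_neg h]
  have hsec : ∑ j ∈ Finset.range (N+2),
      (((N+j:ℕ):ℤ)+1) * (-1)^((N+j)+N) * (if N = T (((N+j:ℕ):ℤ) - (N:ℤ)) then 1 else 0)
      = ∑ j ∈ Finset.range (N+2),
        (((N:ℤ)+j+1) * (-1)^j * (if j*(j+1)/2 = N then 1 else 0)) := by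
    refine Finset.sum_congr rfl fun j _ => ?_
    rw [show ((N+j:ℕ):ℤ) - (N:ℤ) = (j:ℤ) by push_cast; ring, T_ofNat,
      neg_one_pow_congr' (show ((N+j)+N) % 2 = j % 2 by omega),
      show ((N+j:ℕ):ℤ) + 1 = (N:ℤ)+j+1 by push_cast; ring]
    rcases eq_or_ne (j*(j+1)/2) N with h | h
    · rw [if_pos h.symm, if_pos h]
    · rw [if_neg (Ne.symm h), if_neg h]
  rw [hfirst, hsec, Finset.sum_range_succ _ (N+1), Finset.sum_range_succ _ N,
    Finset.sum_range_succ _ N]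
  have hlast : (((N:ℤ)+((N+1:ℕ):ℤ)+1) * (-1)^(N+1) * (if (N+1)*((N+1)+1)/2 = N then 1 else 0)) = 0 := by
    rw [if_neg, mul_zero]
    have h1 := T_nonneg_ge (N+1)
    rw [T_ofNat] at h1
    omega
  rw [hlast, add_zero, ← add_assoc, ← Finset.sum_add_distrib]
  have hterm : ∀ j ∈ Finset.range N,
      (((N:ℤ)-j) * (-1)^(j+1) * (if j*(j+1)/2 = N then 1 else 0)
        + ((N:ℤ)+j+1) * (-1)^j * (if j*(j+1)/2 = N then 1 else 0))
      = (if j*(j+1)/2 = N then (-1:ℤ)^j * (2*j+1) else 0) := by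
    intro j _
    rcases eq_or_ne (j*(j+1)/2) N with h | h
    · simp only [if_pos h, pow_succ]; push_cast; ring
    · simp only [if_neg h]; ring
  rw [Finset.sum_congr rfl hterm]
  rcases eq_or_ne (N*(N+1)/2) N with h | h
  · simp only [if_pos h]; push_cast; ring
  · simp only [if_neg h]; ring


end JacobiAux

open PowerSeries Finset

/-- `(q^a; q^a)_∞ = ∏_{j ≥ 1} (1 - q^{a j})` as a formal power series over ℤ:
the coefficient of `q^N` is computed from the (sufficient) finite partial product. -/
noncomputable def E (a : ℕ) : PowerSeries ℤ :=
  PowerSeries.mk fun N =>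
    (∏ j ∈ Finset.range (N + 1), (1 - Polynomial.X ^ (a * (j + 1)) : Polynomial ℤ)).coeff N

/-- `(q; q²)_∞ = ∏_{j ≥ 0} (1 - q^{2j+1})`. -/
noncomputable def Eodd : PowerSeries ℤ :=
  PowerSeries.mk fun N =>
    (∏ j ∈ Finset.range (N + 1), (1 - Polynomial.X ^ (2 * j + 1) : Polynomial ℤ)).coeff N

/-- `(-q; q²)_∞ = ∏_{j ≥ 0} (1 + q^{2j+1})`. -/
noncomputable def EoddNeg : PowerSeries ℤ :=
  PowerSeries.mk fun N =>
    (∏ j ∈ Finset.range (N + 1), (1 + Polynomial.X ^ (2 * j + 1) : Polynomial ℤ)).coeff N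

/-- Ramanujan's theta function `φ(q^a) = ∑_{m ∈ ℤ} q^{a m²}`. -/
noncomputable def phi (a : ℕ) : PowerSeries ℤ :=
  PowerSeries.mk fun N => (Nat.card {m : ℤ // a * m ^ 2 = N} : ℤ)

/-- Ramanujan's theta function `ψ(q^a) = ∑_{k ≥ 0} q^{a k(k+1)/2}`. -/
noncomputable def psi (a : ℕ) : PowerSeries ℤ :=
  PowerSeries.mk fun N => (Nat.card {k : ℕ // a * (k * (k + 1) / 2) = N} : ℤ)



/-- Jacobi's identity: `(q;q)_∞³ = ∑_{k ≥ 0} (−1)^k (2k+1) q^{k(k+1)/2}`. -/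
theorem jacobi_identity :
    E 1 ^ 3 =
      PowerSeries.mk fun N =>
        ∑ k ∈ Finset.range (N + 1),
          if k * (k + 1) / 2 = N then (-1 : ℤ) ^ k * (2 * k + 1) else 0 := by
  ext N
  rw [PowerSeries.coeff_mk]
  have hE : ∀ j : ℕ, j < N+1 → (PowerSeries.coeff j) (E 1) = (Pq (N+1)).coeff j := by
    intro j hj
    rw [E, PowerSeries.coeff_mk]
    have h1 : (∏ i ∈ Finset.range (j+1), (1 - Polynomial.X ^ (1*(i+1)) : Polynomial ℤ))
        = Pq (j+1) := by
      rw [Pq]; exact Finset.prod_congr rfl fun i _ => by rw [one_mul]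
    rw [h1]
    have hst := Pq_stab (j+1) (N-j)
    rw [show j+1 + (N-j) = N+1 by omega] at hst
    have h2 := Polynomial.X_pow_dvd_iff.mp hst j (by omega)
    rw [Polynomial.coeff_sub, sub_eq_zero] at h2
    exact h2.symm
  have hdvd : (PowerSeries.X : PowerSeries ℤ)^(N+1) ∣ (E 1 - (Pq (N+1) : PowerSeries ℤ)) := by
    rw [PowerSeries.X_pow_dvd_iff]
    intro m hm
    rw [map_sub, Polynomial.coeff_coe, hE m hm, sub_self]
  have hcube : (PowerSeries.X : PowerSeries ℤ)^(N+1)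
      ∣ (E 1^3 - ((Pq (N+1) : PowerSeries ℤ))^3) := by
    have h3 : E 1^3 - ((Pq (N+1) : PowerSeries ℤ))^3
        = (E 1 - Pq (N+1)) * (E 1^2 + E 1 * Pq (N+1) + (Pq (N+1) : PowerSeries ℤ)^2) := by
      ring
    rw [h3]; exact hdvd.mul_right _
  have hA : (PowerSeries.coeff N) (E 1 ^ 3) = (Pq (N+1)^3).coeff N := by
    have h0 := PowerSeries.X_pow_dvd_iff.mp hcube N (by omega)
    rw [map_sub, sub_eq_zero] at h0
    rw [h0, ← Polynomial.coe_pow, Polynomial.coeff_coe]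
  have hB : (Pq (N+1)^3).coeff N = (Pq (N+1)^2 * Pq N).coeff N := by
    have hst := Pq_stab N 1
    have hd : (Polynomial.X : Polynomial ℤ)^(N+1) ∣ (Pq (N+1)^3 - Pq (N+1)^2 * Pq N) := by
      have h3 : Pq (N+1)^3 - Pq (N+1)^2 * Pq N = (Pq (N+1) - Pq N) * Pq (N+1)^2 := by ring
      rw [h3]
      exact Dvd.dvd.mul_right hst _
    have h0 := Polynomial.X_pow_dvd_iff.mp hd N (by omega)
    rw [Polynomial.coeff_sub, sub_eq_zero] at h0
    exact h0
  have hC : Pq (N+1)^2 * Pq N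
      = ∑ i ∈ Finset.range (2*N+2), Polynomial.C (((i:ℤ)+1) * (-1)^(i+N))
          * (Pq (N+1) * gauss (2*N+2) (i+1)) * Polynomial.X^(T ((i:ℤ) - (N:ℤ))) := by
    have hMI := main_identity N
    have hsq : ((-1 : Polynomial ℤ))^N * (-1 : Polynomial ℤ)^N = 1 := by
      rw [← pow_add]; exact Even.neg_one_pow ⟨N, rfl⟩
    calc Pq (N+1)^2 * Pq N
        = ((-1:Polynomial ℤ)^N * Pq (N+1)) * (Pq (N+1) * ((-1)^N * Pq N)) := by
          linear_combination (-(Pq (N+1)^2 * Pq N)) * hsq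
      _ = ((-1:Polynomial ℤ)^N * Pq (N+1)) * ∑ i ∈ Finset.range (2*N+2),
            l (N+1) (i+1) * ((i : Polynomial ℤ)+1) * (-1)^i := by rw [hMI]
      _ = ∑ i ∈ Finset.range (2*N+2), Polynomial.C (((i:ℤ)+1) * (-1)^(i+N))
            * (Pq (N+1) * gauss (2*N+2) (i+1)) * Polynomial.X^(T ((i:ℤ) - (N:ℤ))) := by
          rw [Finset.mul_sum]
          refine Finset.sum_congr rfl fun i _ => ?_
          rw [l_eq (N+1) (i+1), show (2*(N+1)) = 2*N+2 by ring,
            show ((i+1:ℕ):ℤ) - ((N+1:ℕ):ℤ) = (i:ℤ) - (N:ℤ) by push_cast; ring]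
          have hc : Polynomial.C (((i:ℤ)+1) * (-1)^(i+N))
              = ((i : Polynomial ℤ)+1) * (-1)^(i+N) := by
            simp only [map_mul, map_add, map_pow, map_neg, map_one, map_natCast]
          rw [hc, pow_add]
          ring
  have hD : (Polynomial.X : Polynomial ℤ)^(N+1) ∣
      ((∑ i ∈ Finset.range (2*N+2), Polynomial.C (((i:ℤ)+1)*(-1)^(i+N))
          * (Pq (N+1) * gauss (2*N+2) (i+1)) * Polynomial.X^(T ((i:ℤ) - (N:ℤ))))
        - ∑ i ∈ Finset.range (2*N+2), Polynomial.C (((i:ℤ)+1)*(-1)^(i+N))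
          * Polynomial.X^(T ((i:ℤ) - (N:ℤ)))) := by
    rw [← Finset.sum_sub_distrib]
    refine Finset.dvd_sum fun i hi => ?_
    rw [Finset.mem_range] at hi
    obtain ⟨r, hr⟩ := dvd_P_gauss N (i+1) (by omega)
    rw [show min (i+1+1) (2*N+3-(i+1)) = min (i+2) (2*N+2-i) by omega] at hr
    have hterm : Polynomial.C (((i:ℤ)+1)*(-1)^(i+N)) * (Pq (N+1) * gauss (2*N+2) (i+1))
          * Polynomial.X^(T ((i:ℤ) - (N:ℤ)))
        - Polynomial.C (((i:ℤ)+1)*(-1)^(i+N)) * Polynomial.X^(T ((i:ℤ) - (N:ℤ)))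
        = Polynomial.C (((i:ℤ)+1)*(-1)^(i+N)) * Polynomial.X^(T ((i:ℤ) - (N:ℤ)))
            * (Pq (N+1) * gauss (2*N+2) (i+1) - 1) := by ring
    rw [hterm, hr]
    have hb := T_bound N i hi
    have hdv : (Polynomial.X : Polynomial ℤ)^(N+1)
        ∣ Polynomial.X^(T ((i:ℤ) - (N:ℤ))) * Polynomial.X^(min (i+2) (2*N+2-i)) := by
      rw [← pow_add]; exact pow_dvd_pow _ (by omega)
    have h2 : Polynomial.C (((i:ℤ)+1)*(-1)^(i+N)) * Polynomial.X^(T ((i:ℤ) - (N:ℤ)))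
          * (Polynomial.X^(min (i+2) (2*N+2-i)) * r)
        = (Polynomial.X^(T ((i:ℤ) - (N:ℤ))) * Polynomial.X^(min (i+2) (2*N+2-i)))
            * (Polynomial.C (((i:ℤ)+1)*(-1)^(i+N)) * r) := by ring
    rw [h2]
    exact Dvd.dvd.mul_right hdv _
  have hDC : (Pq (N+1)^2 * Pq N).coeff N
      = (∑ i ∈ Finset.range (2*N+2), Polynomial.C (((i:ℤ)+1)*(-1)^(i+N))
          * Polynomial.X^(T ((i:ℤ) - (N:ℤ)))).coeff N := by
    rw [hC]
    have h0 := Polynomial.X_pow_dvd_iff.mp hD N (by omega)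
    rw [Polynomial.coeff_sub, sub_eq_zero] at h0
    exact h0
  have hE2 : (∑ i ∈ Finset.range (2*N+2), Polynomial.C (((i:ℤ)+1)*(-1)^(i+N))
        * Polynomial.X^(T ((i:ℤ) - (N:ℤ)))).coeff N
      = ∑ i ∈ Finset.range (2*N+2),
          (((i:ℤ)+1) * (-1)^(i+N) * (if N = T ((i:ℤ) - (N:ℤ)) then 1 else 0)) := by
    rw [Polynomial.finset_sum_coeff]
    refine Finset.sum_congr rfl fun i _ => ?_
    rw [Polynomial.coeff_C_mul, Polynomial.coeff_X_pow]
  rw [hA, hB, hDC, hE2, final_sum]
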